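/- Let V ⊂ ℝ be a compact interval of positive length and let p be a polynomial of degree at most k−1 on V. Then the set {x ∈ V : |p(x)| ≥ 8^{-(k-1)} · sup_{y∈V} |p(y)|} has Lebesgue measure at least |V|/2. -/

import Mathlib

open MeasureTheory Set Finset

section AuxRemez

lemma remez_pairL (K w t : ℝ) (hK : 0 ≤ K) (hw : |w| ≤ 2*K) (ht : |t| ≤ K) :
    (K + |w - t|) * (K + |w + t|) ≤ (3*K - t) * (3*K + t) := by
  obtain ⟨hw1, hw2⟩ := abs_le.mp hw
  obtain ⟨ht1, ht2⟩ := abs_le.mp ht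
  rcases abs_cases (w - t) with ⟨e1, _⟩ | ⟨e1, _⟩ <;>
    rcases abs_cases (w + t) with ⟨e2, _⟩ | ⟨e2, _⟩ <;> rw [e1, e2] <;> nlinarith

lemma remez_cbL (n : ℕ) (hn : 1 ≤ n) : 2 * (2*n).choose n ≤ 4^n := by
  induction n with
  | zero => omega
  | succ m ih =>
    rcases Nat.eq_or_lt_of_le hn with h | h
    · simp [← h]
    · have hm : 1 ≤ m := by omega
      have ihm := ih hm
      have key := Nat.succ_mul_centralBinom_succ m
      have h2 : (m+1) * (2 * (2*(m+1)).choose (m+1)) ≤ (m+1) * 4^(m+1) := by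
        have e1 : (m+1) * (2 * (2*(m+1)).choose (m+1)) = 2 * ((m+1) * Nat.centralBinom (m+1)) := by
          rw [Nat.centralBinom_eq_two_mul_choose]; ring
        rw [e1, key]
        have h5 : 2 * Nat.centralBinom m ≤ 4^m := by
          rw [Nat.centralBinom_eq_two_mul_choose]; exact ihm
        calc 2 * (2 * (2 * m + 1) * Nat.centralBinom m)
            = (2*(2*m+1)) * (2 * Nat.centralBinom m) := by ring
          _ ≤ (2*(2*m+1)) * 4^m := Nat.mul_le_mul_left _ h5
          _ ≤ ((m+1)*4) * 4^m := Nat.mul_le_mul_right _ (by omega)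
          _ = (m+1) * 4^(m+1) := by ring
      exact Nat.le_of_mul_le_mul_left h2 (by omega)

lemma remez_sumL (n : ℕ) (hn : 1 ≤ n) :
    ∑ i ∈ range (n+1), 2 * ((∏ j ∈ range (n+1), (2*n - j : ℕ) : ℕ) : ℝ)
      / ((n : ℝ) * ((Nat.factorial i : ℝ) * (Nat.factorial (n - i) : ℝ))) ≤ 8^n := by
  set Q : ℕ := ∏ j ∈ range (n+1), (2*n - j : ℕ) with hQ
  have hQdesc : Q = (2*n).descFactorial (n+1) := by
    rw [hQ, Nat.descFactorial_eq_prod_range]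
  have hQfac : Nat.factorial (n-1) * Q = Nat.factorial (2*n) := by
    rw [hQdesc]
    have h : 2*n - (n+1) = n - 1 := by omega
    rw [← h]
    exact Nat.factorial_mul_descFactorial (by omega)
  have step : ∀ i ∈ range (n+1),
      2 * (Q : ℝ) / ((n : ℝ) * ((Nat.factorial i : ℝ) * (Nat.factorial (n - i) : ℝ)))
      = (2 * Q / ((n:ℝ) * (Nat.factorial n))) * (n.choose i : ℝ) := by
    intro i hi
    have hin : i ≤ n := by simpa using Nat.lt_succ_iff.mp (mem_range.mp hi)
    have hcf : (n.choose i : ℝ) * (Nat.factorial i : ℝ) * (Nat.factorial (n-i) : ℝ)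
        = (Nat.factorial n : ℝ) := by
      exact_mod_cast congrArg (Nat.cast (R := ℝ)) (Nat.choose_mul_factorial_mul_factorial hin)
    rw [div_mul_eq_mul_div, div_eq_div_iff (by positivity) (by positivity)]
    linear_combination (-2)*(Q:ℝ)*(n:ℝ)*hcf
  rw [Finset.sum_congr rfl step, ← Finset.mul_sum]
  have hsum : ∑ i ∈ range (n+1), (n.choose i : ℝ) = 2^n := by
    exact_mod_cast congrArg (Nat.cast (R := ℝ)) (Nat.sum_range_choose n)
  rw [hsum]
  rw [div_mul_eq_mul_div, div_le_iff₀ (by positivity)]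
  have hnat : 2 * Q * 2^n ≤ 8^n * (n * Nat.factorial n) := by
    have hcb := remez_cbL n hn
    have hfac : Nat.factorial (2*n) = (2*n).choose n * (Nat.factorial n * Nat.factorial n) := by
      have h0 := Nat.choose_mul_factorial_mul_factorial (show n ≤ 2*n by omega)
      have h2 : 2*n - n = n := by omega
      rw [h2] at h0; rw [← h0]; ring
    have key : 2 * Nat.factorial (2*n) * 2^n ≤ 8^n * (Nat.factorial n * Nat.factorial n) := by
      rw [hfac]
      calc 2 * ((2*n).choose n * (Nat.factorial n * Nat.factorial n)) * 2^n
          = (2 * (2*n).choose n) * 2^n * (Nat.factorial n * Nat.factorial n) := by ring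
        _ ≤ 4^n * 2^n * (Nat.factorial n * Nat.factorial n) := by
            exact Nat.mul_le_mul_right _ (Nat.mul_le_mul_right _ hcb)
        _ = 8^n * (Nat.factorial n * Nat.factorial n) := by rw [← Nat.mul_pow]
    have hmul : (2 * Q * 2^n) * Nat.factorial (n-1) ≤ (8^n * (n * Nat.factorial n)) * Nat.factorial (n-1) := by
      have e1 : (2 * Q * 2^n) * Nat.factorial (n-1) = 2 * (Nat.factorial (n-1) * Q) * 2^n := by ring
      have e2 : (8^n * (n * Nat.factorial n)) * Nat.factorial (n-1) = 8^n * (Nat.factorial n * (n * Nat.factorial (n-1))) := by ring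
      have e3 : n * Nat.factorial (n-1) = Nat.factorial n := by
        cases n with
        | zero => omega
        | succ m => simp [Nat.factorial_succ]
      rw [e1, hQfac, e2, e3]; exact key
    exact Nat.le_of_mul_le_mul_right hmul (Nat.factorial_pos _)
  calc 2 * (Q:ℝ) * 2^n ≤ (8^n * (n * Nat.factorial n) : ℕ) := by exact_mod_cast hnat
    _ = 8^n * ((n:ℝ) * (Nat.factorial n)) := by push_cast; ring

lemma remez_prod_succ_factorial : ∀ m : ℕ, ∏ j ∈ range m, (j+1) = Nat.factorial m
  | 0 => by simp
  | (m+1) => by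
      rw [Finset.prod_range_succ, remez_prod_succ_factorial m, Nat.factorial_succ]; ring

lemma remez_erase_split (n i : ℕ) (hi : i ≤ n) :
    (range (n+1)).erase i = range i ∪ Finset.Ico (i+1) (n+1) := by
  ext j
  simp only [Finset.mem_erase, Finset.mem_range, Finset.mem_union, Finset.mem_Ico]
  omega

lemma remez_prod_erase_dist (n i : ℕ) (hi : i ≤ n) :
    ∏ j ∈ (range (n+1)).erase i, |(i:ℝ) - (j:ℝ)|
      = (Nat.factorial i : ℝ) * (Nat.factorial (n-i) : ℝ) := by
  rw [remez_erase_split n i hi, prod_union (by simp [Finset.disjoint_left]; omega)]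
  congr 1
  · have h1 : ∀ j ∈ range i, |(i:ℝ) - (j:ℝ)| = ((i - j : ℕ) : ℝ) := by
      intro j hj
      have hji : j < i := mem_range.mp hj
      rw [abs_of_pos (sub_pos.mpr (by exact_mod_cast hji)), Nat.cast_sub hji.le]
    rw [prod_congr rfl h1, ← Nat.cast_prod]
    congr 1
    calc ∏ j ∈ range i, (i - j) = ∏ j ∈ range i, (j + 1) := by
          rw [← Finset.prod_range_reflect (fun j => j + 1) i]
          exact prod_congr rfl (fun j hj => by have := mem_range.mp hj; omega)
      _ = Nat.factorial i := remez_prod_succ_factorial i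
  · have h1 : ∀ j ∈ Finset.Ico (i+1) (n+1), |(i:ℝ) - (j:ℝ)| = ((j - i : ℕ) : ℝ) := by
      intro j hj
      have hji : i < j := (Finset.mem_Ico.mp hj).1
      rw [abs_sub_comm, abs_of_pos (sub_pos.mpr (by exact_mod_cast hji)), Nat.cast_sub hji.le]
    rw [prod_congr rfl h1, ← Nat.cast_prod]
    congr 1
    rw [Finset.prod_Ico_eq_prod_range]
    have h2 : ∀ j ∈ range (n+1-(i+1)), (i + 1 + j - i) = j + 1 := fun j _ => by omega
    rw [prod_congr rfl h2]
    have h3 : n+1-(i+1) = n - i := by omega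
    rw [h3]
    exact remez_prod_succ_factorial (n-i)

end AuxRemez

set_option maxHeartbeats 1000000 in
theorem stmt_0 (k : ℕ) (hk : 1 ≤ k) (a b : ℝ) (hab : a < b) (p : Polynomial ℝ)
    (hdeg : p.natDegree ≤ k - 1) :
    volume ({x ∈ Set.Icc a b |
        ((8 : ℝ) ^ (k - 1))⁻¹ * (⨆ y : Set.Icc a b, |p.eval (y : ℝ)|) ≤ |p.eval x|})
      ≥ volume (Set.Icc a b) / 2 := by
  have hne : Nonempty ↥(Set.Icc a b) := (Set.nonempty_Icc.mpr hab.le).to_subtype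
  set n := k - 1 with hkn
  clear_value n
  set M : ℝ := ⨆ y : Set.Icc a b, |p.eval (y : ℝ)| with hMdef
  -- maximum attained
  obtain ⟨xs, hxs, hxsmax⟩ : ∃ x ∈ Set.Icc a b, ∀ y ∈ Set.Icc a b, |p.eval y| ≤ |p.eval x| := by
    obtain ⟨x, hx, hmax⟩ := isCompact_Icc.exists_isMaxOn (Set.nonempty_Icc.mpr hab.le)
      ((p.continuous.abs).continuousOn : ContinuousOn (fun y : ℝ => |p.eval y|) (Set.Icc a b))
    exact ⟨x, hx, fun y hy => hmax hy⟩
  have hbdd : BddAbove (Set.range (fun y : Set.Icc a b => |p.eval (y:ℝ)|)) :=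
    ⟨|p.eval xs|, by rintro z ⟨y, rfl⟩; exact hxsmax y y.2⟩
  have hMval : M = |p.eval xs| := by
    apply le_antisymm
    · exact ciSup_le (fun y => hxsmax y y.2)
    · exact le_ciSup hbdd ⟨xs, hxs⟩
  have hMub : ∀ y ∈ Set.Icc a b, |p.eval y| ≤ M := by
    intro y hy; rw [hMval]; exact hxsmax y hy
  have hM0 : 0 ≤ M := hMval ▸ abs_nonneg _
  clear_value M
  -- trivial cases
  rcases Nat.eq_zero_or_pos n with hn0 | hn1
  · have hpc : p = Polynomial.C (p.coeff 0) :=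
      Polynomial.eq_C_of_natDegree_le_zero (hn0 ▸ hdeg)
    have hset : {x ∈ Set.Icc a b |
        ((8 : ℝ) ^ n)⁻¹ * M ≤ |p.eval x|} = Set.Icc a b := by
      ext x
      simp only [Set.mem_setOf_eq, hn0, pow_zero, inv_one, one_mul, Set.mem_Icc]
      constructor
      · rintro ⟨h, -⟩; exact h
      · intro h
        refine ⟨h, ?_⟩
        rw [hMval]
        conv_lhs => rw [hpc]
        rw [hpc]
        simp
    rw [hset]
    exact ENNReal.half_le_self
  rcases eq_or_lt_of_le hM0 with hMz | hM
  · have hset : {x ∈ Set.Icc a b |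
        ((8 : ℝ) ^ n)⁻¹ * M ≤ |p.eval x|} = Set.Icc a b := by
      ext x
      simp only [Set.mem_setOf_eq, ← hMz, mul_zero]
      exact ⟨fun h => h.1, fun h => ⟨h, abs_nonneg _⟩⟩
    rw [hset]
    exact ENNReal.half_le_self
  -- main case
  by_contra hcon
  rw [not_le] at hcon
  set θ : ℝ := ((8:ℝ)^n)⁻¹ with hθdef
  have hθ : 0 < θ := by positivity
  set L : ℝ := b - a with hLdef
  have hL : 0 < L := by simp [hLdef]; linarith
  set G : Set ℝ := {x ∈ Set.Icc a b | θ * M ≤ |p.eval x|} with hGdef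
  have hGclosed : IsClosed G := by
    have : G = Set.Icc a b ∩ {x : ℝ | θ * M ≤ |p.eval x|} := by
      ext x; simp [hGdef, Set.mem_setOf_eq]
    rw [this]
    exact isClosed_Icc.inter (isClosed_le continuous_const p.continuous.abs)
  have hGsub : G ⊆ Set.Icc a b := fun x hx => hx.1
  have hGmeas : MeasurableSet G := hGclosed.measurableSet
  set B : Set ℝ := Set.Icc a b \ G with hBdef
  have hBmeas : MeasurableSet B := measurableSet_Icc.diff hGmeas
  have hBsub : B ⊆ Set.Icc a b := fun x hx => hx.1
  have hBsmall : ∀ y ∈ B, |p.eval y| < θ * M := by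
    intro y hy
    by_contra h
    exact hy.2 ⟨hy.1, not_lt.mp h⟩
  have hIccvol : volume (Set.Icc a b) = ENNReal.ofReal L := by
    rw [Real.volume_Icc]
  have hBfin : volume B ≠ ⊤ := by
    refine ne_top_of_le_ne_top ?_ (measure_mono hBsub)
    rw [hIccvol]; exact ENNReal.ofReal_ne_top
  have hBbig : ENNReal.ofReal L / 2 < volume B := by
    have h1 : volume (Set.Icc a b) ≤ volume G + volume B := by
      refine le_trans (measure_mono ?_) (measure_union_le G B)
      intro x hx
      by_cases h : x ∈ G
      · exact Or.inl h
      · exact Or.inr ⟨hx, h⟩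
    have h2 : volume G + volume B < ENNReal.ofReal L / 2 + volume B :=
      ENNReal.add_lt_add_right hBfin (by rw [hIccvol] at hcon; exact hcon)
    have h3 : ENNReal.ofReal L / 2 + ENNReal.ofReal L / 2 < ENNReal.ofReal L / 2 + volume B := by
      calc ENNReal.ofReal L / 2 + ENNReal.ofReal L / 2 = ENNReal.ofReal L := ENNReal.add_halves _
        _ ≤ volume G + volume B := hIccvol ▸ h1
        _ < _ := h2
    exact lt_of_add_lt_add_left h3
  set μ : ℝ := (volume B).toReal with hμdef
  have hμL2 : L / 2 < μ := by
    have := ENNReal.toReal_lt_toReal (ENNReal.div_lt_top ENNReal.ofReal_ne_top two_ne_zero).ne hBfin |>.mpr hBbig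
    rwa [ENNReal.toReal_div, ENNReal.toReal_ofReal hL.le] at this
  have hμle : μ ≤ L := by
    have := ENNReal.toReal_le_toReal hBfin (hIccvol ▸ ENNReal.ofReal_ne_top) |>.mpr
      (measure_mono hBsub)
    rwa [hIccvol, ENNReal.toReal_ofReal hL.le] at this
  have hnR : (0:ℝ) < n := by exact_mod_cast hn1
  set d : ℝ := (μ + L/2)/(2*n) with hddef
  have hd : 0 < d := by
    apply div_pos (by linarith) (by linarith)
  have h2nd : 2*(n:ℝ)*d = μ + L/2 := by
    rw [hddef]; field_simp
  have hLd : L < 2*(n:ℝ)*d := by rw [h2nd]; linarith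
  have hnd : (n:ℝ)*d < μ := by nlinarith
  have hndL : (n:ℝ)*d < L := by nlinarith
  have hndpos : 0 < (n:ℝ)*d := by positivity
  set ε : ℝ := μ - n*d with hεdef
  have hε : 0 < ε := by simp [hεdef]; linarith
  set c : ℕ → ℝ := fun i => ε + i*d with hcdef
  have hc0 : ∀ i, 0 < c i := by
    intro i
    have : (0:ℝ) ≤ i*d := by positivity
    simp only [hcdef]; linarith
  have hcn : ∀ i ≤ n, c i ≤ μ := by
    intro i hi
    have : (i:ℝ)*d ≤ n*d := by
      apply mul_le_mul_of_nonneg_right _ hd.le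
      exact_mod_cast hi
    simp only [hcdef, hεdef]; linarith
  set f : ℝ → ℝ := fun t => (volume (B ∩ Set.Icc a t)).toReal with hfdef
  have hfin : ∀ s : Set ℝ, volume (B ∩ s) ≠ ⊤ :=
    fun s => ne_top_of_le_ne_top hBfin (measure_mono Set.inter_subset_left)
  have hsplit : ∀ t t' : ℝ, t ≤ t' →
      volume (B ∩ Set.Icc a t') = volume (B ∩ Set.Icc a t) + volume (B ∩ Set.Ioc t t') := by
    intro t t' htt
    have hset : B ∩ Set.Icc a t' = (B ∩ Set.Icc a t) ∪ (B ∩ Set.Ioc t t') := by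
      ext x
      constructor
      · rintro ⟨hxB, hx1, hx2⟩
        rcases le_or_gt x t with h | h
        · exact Or.inl ⟨hxB, hx1, h⟩
        · exact Or.inr ⟨hxB, h, hx2⟩
      · rintro (⟨hxB, hx1, hx2⟩ | ⟨hxB, hx1, hx2⟩)
        · exact ⟨hxB, hx1, le_trans hx2 htt⟩
        · exact ⟨hxB, (hBsub hxB).1, hx2⟩
    rw [hset]
    apply measure_union _ (hBmeas.inter measurableSet_Ioc)
    rw [Set.disjoint_left]
    rintro x ⟨-, -, hx2⟩ ⟨-, hx3, -⟩
    exact absurd hx2 (not_le.mpr hx3)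
  have hfd : ∀ t t' : ℝ, t ≤ t' → f t' - f t = (volume (B ∩ Set.Ioc t t')).toReal := by
    intro t t' htt
    simp only [hfdef]
    rw [hsplit t t' htt, ENNReal.toReal_add (hfin _) (hfin _)]
    ring
  have hflip : ∀ t t' : ℝ, t ≤ t' → f t' - f t ≤ t' - t := by
    intro t t' htt
    rw [hfd t t' htt]
    have h1 : volume (B ∩ Set.Ioc t t') ≤ ENNReal.ofReal (t' - t) := by
      refine le_trans (measure_mono Set.inter_subset_right) ?_
      rw [Real.volume_Ioc]
    calc (volume (B ∩ Set.Ioc t t')).toReal ≤ (ENNReal.ofReal (t' - t)).toReal :=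
          ENNReal.toReal_mono ENNReal.ofReal_ne_top h1
      _ = t' - t := ENNReal.toReal_ofReal (by linarith)
  have hfmono : ∀ t t' : ℝ, t ≤ t' → f t ≤ f t' := by
    intro t t' htt
    have := hfd t t' htt
    have h0 : (0:ℝ) ≤ (volume (B ∩ Set.Ioc t t')).toReal := ENNReal.toReal_nonneg
    linarith
  have hcont : Continuous f := by
    rw [Metric.continuous_iff]
    intro t η hη
    refine ⟨η, hη, fun t' ht' => ?_⟩
    rw [Real.dist_eq] at *
    rcases le_total t' t with h | h
    · have h1 := hflip t' t h
      have h2 := hfmono t' t h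
      have : |f t' - f t| ≤ |t' - t| := by
        rw [abs_of_nonpos (by linarith), abs_of_nonpos (by linarith)]; linarith
      linarith [this.trans_lt ht']
    · have h1 := hflip t t' h
      have h2 := hfmono t t' h
      have : |f t' - f t| ≤ |t' - t| := by
        rw [abs_of_nonneg (by linarith), abs_of_nonneg (by linarith)]; linarith
      linarith [this.trans_lt ht']
  have hfa : f a = 0 := by
    simp only [hfdef]
    rw [Set.Icc_self]
    have : volume (B ∩ {a}) = 0 :=
      measure_mono_null Set.inter_subset_right (Real.volume_singleton)
    rw [this]; rfl
  have hfb : f b = μ := by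
    simp only [hfdef, hμdef]
    rw [Set.inter_eq_self_of_subset_left hBsub]
  set S : ℕ → Set ℝ := fun i => {t : ℝ | t ∈ Set.Icc a b ∧ c i ≤ f t} with hSdef
  have hSclosed : ∀ i, IsClosed (S i) := by
    intro i
    have : S i = Set.Icc a b ∩ {t : ℝ | c i ≤ f t} := by ext t; simp [hSdef, Set.mem_setOf_eq]
    rw [this]
    exact isClosed_Icc.inter (isClosed_le continuous_const hcont)
  have hSne : ∀ i ≤ n, b ∈ S i := by
    intro i hi
    exact ⟨Set.right_mem_Icc.mpr hab.le, hfb ▸ hcn i hi⟩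
  have hSbdd : ∀ i, BddBelow (S i) := fun i => ⟨a, fun t ht => ht.1.1⟩
  set v : ℕ → ℝ := fun i => sInf (S i) with hvdef
  have hvS : ∀ i ≤ n, v i ∈ S i := by
    intro i hi
    exact (hSclosed i).csInf_mem ⟨b, hSne i hi⟩ (hSbdd i)
  have hvI : ∀ i ≤ n, v i ∈ Set.Icc a b := fun i hi => (hvS i hi).1
  have hfvge : ∀ i ≤ n, c i ≤ f (v i) := fun i hi => (hvS i hi).2
  have hvi : ∀ i, v i = sInf (S i) := fun i => congrFun hvdef i
  clear_value θ L G B μ d ε c f S v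
  have hva : ∀ i ≤ n, a < v i := by
    intro i hi
    rcases eq_or_lt_of_le (hvI i hi).1 with h | h
    · exfalso
      have := hfvge i hi
      rw [← h, hfa] at this
      exact absurd this (not_le.mpr (hc0 i))
    · exact h
  have hlow : ∀ i ≤ n, ∀ t, a ≤ t → t < v i → f t < c i := by
    intro i hi t hat htv
    by_contra h
    have htS : t ∈ S i := by
      rw [hSdef]
      exact ⟨⟨hat, le_trans htv.le (hvI i hi).2⟩, not_lt.mp h⟩
    have := csInf_le (hSbdd i) htS
    rw [← hvi i] at this
    exact absurd this (not_le.mpr htv)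
  have hfvle : ∀ i ≤ n, f (v i) ≤ c i := by
    intro i hi
    have htend : Filter.Tendsto f (nhdsWithin (v i) (Set.Iio (v i))) (nhds (f (v i))) :=
      (hcont.tendsto (v i)).mono_left nhdsWithin_le_nhds
    refine le_of_tendsto htend ?_
    filter_upwards [Ioo_mem_nhdsLT_of_mem (Set.mem_Ioc.mpr ⟨hva i hi, le_refl _⟩)] with t ht
    exact (hlow i hi t ht.1.le ht.2).le
  have hnear : ∀ i ≤ n, ∀ δ : ℝ, 0 < δ → ∃ y, y ∈ B ∧ v i - δ < y ∧ y ≤ v i := by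
    intro i hi δ hδ
    set t : ℝ := max a (v i - δ) with htdef
    have hat : a ≤ t := le_max_left _ _
    have htv : t < v i := max_lt (hva i hi) (by linarith)
    have hflt : f t < c i := hlow i hi t hat htv
    have hpos : 0 < (volume (B ∩ Set.Ioc t (v i))).toReal := by
      have := hfd t (v i) htv.le
      have h2 := hfvge i hi
      linarith
    have hne0 : volume (B ∩ Set.Ioc t (v i)) ≠ 0 := by
      intro h
      rw [h] at hpos
      simp at hpos
    obtain ⟨y, hyB, hy1, hy2⟩ := MeasureTheory.nonempty_of_measure_ne_zero hne0
    exact ⟨y, hyB, lt_of_le_of_lt (by simp [htdef]) hy1, hy2⟩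
  have hnode : ∀ i ≤ n, |p.eval (v i)| ≤ θ * M := by
    intro i hi
    by_contra hgt
    rw [not_le] at hgt
    have hopen : IsOpen {y : ℝ | θ * M < |p.eval y|} :=
      isOpen_lt continuous_const p.continuous.abs
    obtain ⟨δ, hδ, hball⟩ := Metric.isOpen_iff.mp hopen (v i) hgt
    obtain ⟨y, hyB, hy1, hy2⟩ := hnear i hi δ hδ
    have hyball : y ∈ Metric.ball (v i) δ := by
      rw [Metric.mem_ball, Real.dist_eq, abs_of_nonpos (by linarith)]
      linarith
    exact absurd (hball hyball) (not_lt.mpr (hBsmall y hyB).le)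
  have hgap : ∀ i, i + 1 ≤ n → d ≤ v (i+1) - v i := by
    intro i hi
    have hvv : v i ≤ v (i+1) := by
      rw [hvi i, hvi (i+1)]
      apply csInf_le_csInf (hSbdd i) ⟨b, hSne (i+1) hi⟩
      intro t ht
      simp only [hSdef, Set.mem_setOf_eq] at ht ⊢
      refine ⟨ht.1, le_trans ?_ ht.2⟩
      simp only [hcdef]
      push_cast
      have hd0 : (0:ℝ) ≤ d := hd.le
      nlinarith
    have h1 := hfvge (i+1) hi
    have h2 := hfvle i (by omega)
    have h3 := hfd (v i) (v (i+1)) hvv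
    have h4 : f (v (i+1)) - f (v i) ≤ v (i+1) - v i := hflip _ _ hvv
    have h5 : c (i+1) - c i = d := by simp only [hcdef]; push_cast; ring
    linarith
  have hsep : ∀ m i : ℕ, i + m ≤ n → (m:ℝ)*d ≤ v (i+m) - v i := by
    intro m
    induction m with
    | zero => intro i hi; simp
    | succ l ih =>
      intro i hi
      have h1 := ih i (by omega)
      have h2 := hgap (i+l) (by omega)
      have : i + (l+1) = (i+l)+1 := by omega
      rw [this]
      push_cast
      linarith
  have hsep' : ∀ i j : ℕ, i ≤ j → j ≤ n → ((j:ℝ) - i)*d ≤ v j - v i := by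
    intro i j hij hj
    have h1 := hsep (j-i) i (by omega)
    have h2 : i + (j-i) = j := by omega
    rw [h2] at h1
    have h3 : ((j-i : ℕ) : ℝ) = (j:ℝ) - i := Nat.cast_sub hij
    rw [h3] at h1
    exact h1
  have hpos1 : ∀ i ≤ n, a + (i:ℝ)*d ≤ v i := by
    intro i hi
    have h1 := hsep' 0 i (by omega) hi
    have h2 := (hvI 0 (by omega)).1
    simp only [Nat.cast_zero, sub_zero] at h1
    linarith
  have hpos2 : ∀ i ≤ n, v i + ((n:ℝ) - i)*d ≤ b := by
    intro i hi
    have h1 := hsep' i n hi (le_refl n)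
    have h2 := (hvI n (le_refl n)).2
    linarith
  have hinj : Set.InjOn v ↑(Finset.range (n+1)) := by
    intro i hi j hj hij
    simp only [Finset.coe_range, Set.mem_Iio] at hi hj
    by_contra hne
    rcases Nat.lt_or_ge i j with h | h
    · have := hsep' i j h.le (by omega)
      have hd2 : (0:ℝ) < ((j:ℝ) - i)*d := by
        apply mul_pos _ hd
        have : (i:ℝ) < j := by exact_mod_cast h
        linarith
      rw [hij, sub_self] at this
      linarith
    · rcases Nat.lt_or_ge j i with h2 | h2
      · have := hsep' j i h2.le (by omega)
        have hd2 : (0:ℝ) < ((i:ℝ) - j)*d := by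
          apply mul_pos _ hd
          have : (j:ℝ) < i := by exact_mod_cast h2
          linarith
        rw [← hij, sub_self] at this
        linarith
      · omega
  -- Lagrange interpolation setup
  have hdeg' : p.degree < (#(Finset.range (n+1)) : WithBot ℕ) := by
    rw [Finset.card_range]
    refine lt_of_le_of_lt Polynomial.degree_le_natDegree ?_
    exact_mod_cast Nat.lt_succ_of_le hdeg
  have hinterp := Lagrange.eq_interpolate hinj hdeg'
  have heval : p.eval xs = ∑ i ∈ Finset.range (n+1), p.eval (v i) *
      ∏ j ∈ (Finset.range (n+1)).erase i, ((v i - v j)⁻¹ * (xs - v j)) := by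
    conv_lhs => rw [hinterp]
    rw [Lagrange.interpolate_apply, Polynomial.eval_finset_sum]
    refine Finset.sum_congr rfl (fun i hi => ?_)
    rw [Polynomial.eval_mul, Polynomial.eval_C, Lagrange.basis, Polynomial.eval_prod]
    congr 1
    refine Finset.prod_congr rfl (fun j hj => ?_)
    rw [Lagrange.basisDivisor, Polynomial.eval_mul, Polynomial.eval_C, Polynomial.eval_sub,
      Polynomial.eval_X, Polynomial.eval_C]
  set w : ℝ := 2*xs - a - b with hwdef
  clear_value w
  have hwabs : |w| ≤ L := by
    rw [abs_le]
    obtain ⟨hx1, hx2⟩ := hxs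
    constructor <;> [skip; skip] <;> rw [hwdef, hLdef] <;> linarith
  set g : ℕ → ℝ := fun j => ((n:ℝ)*d + |w - (2*(j:ℝ) - n)*d|)/2 with hgdef
  set βr : ℕ → ℝ := fun j => ((L - (n:ℝ)*d) + |w - (2*(j:ℝ) - n)*d|)/2 with hβrdef
  clear_value g βr
  have hβg : ∀ j, βr j < g j := by
    intro j
    rw [hgdef, hβrdef]
    have := abs_nonneg (w - (2*(j:ℝ) - n)*d)
    simp only
    linarith
  have hβpos : ∀ j, 0 < βr j := by
    intro j
    rw [hβrdef]
    have := abs_nonneg (w - (2*(j:ℝ) - n)*d)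
    simp only
    linarith
  have hgpos : ∀ j, (n:ℝ)*d/2 ≤ g j := by
    intro j
    rw [hgdef]
    have := abs_nonneg (w - (2*(j:ℝ) - n)*d)
    simp only
    linarith
  have hxβ : ∀ j ≤ n, |xs - v j| ≤ βr j := by
    intro j hj
    have h1 := hpos1 j hj
    have h2 := hpos2 j hj
    have hA1 : (w - (2*(j:ℝ) - n)*d) ≤ |w - (2*(j:ℝ) - n)*d| := le_abs_self _
    have hA2 : -(w - (2*(j:ℝ) - n)*d) ≤ |w - (2*(j:ℝ) - n)*d| := neg_le_abs _
    rw [hβrdef]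
    simp only
    rw [abs_sub_le_iff]
    obtain ⟨hx1, hx2⟩ := hxs
    constructor
    · rw [hwdef, hLdef] at *
      linarith
    · rw [hwdef, hLdef] at *
      linarith
  have hjcast : ∀ j ≤ n, ((n - j : ℕ) : ℝ) = (n:ℝ) - j := fun j hj => Nat.cast_sub hj
  have hpair : ∀ j ≤ n,
      g j * g (n - j) ≤ (((n + (n-j) : ℕ):ℝ) * d) * (((n + j : ℕ):ℝ) * d) := by
    intro j hj
    have hK : (0:ℝ) ≤ (n:ℝ)*d := hndpos.le
    have hjn : (j:ℝ) ≤ (n:ℝ) := by exact_mod_cast hj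
    have hj0 : (0:ℝ) ≤ (j:ℝ) := by positivity
    have ht : |(2*(j:ℝ) - n)*d| ≤ (n:ℝ)*d := by
      rw [abs_mul, abs_of_pos hd]
      apply mul_le_mul_of_nonneg_right _ hd.le
      rw [abs_le]
      constructor <;> linarith
    have hw2 : |w| ≤ 2*((n:ℝ)*d) := hwabs.trans (by linarith [hLd])
    have key := remez_pairL ((n:ℝ)*d) w ((2*(j:ℝ) - n)*d) hK hw2 ht
    have e1 : g (n - j) = ((n:ℝ)*d + |w + (2*(j:ℝ) - n)*d|)/2 := by
      rw [hgdef]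
      simp only
      rw [hjcast j hj]
      rw [show (2*((n:ℝ) - j) - n)*d = -((2*(j:ℝ) - n)*d) by ring, sub_neg_eq_add]
    have e2 : ((n + (n-j) : ℕ):ℝ) = 2*(n:ℝ) - j := by
      push_cast [Nat.cast_sub hj]; ring
    have e3 : ((n + j : ℕ):ℝ) = (n:ℝ) + j := by push_cast; ring
    rw [e1, e2, e3, hgdef]
    simp only
    rw [show (2*(n:ℝ) - j)*d * (((n:ℝ) + j)*d)
        = ((3*((n:ℝ)*d) - (2*(j:ℝ) - n)*d) * (3*((n:ℝ)*d) + (2*(j:ℝ) - n)*d))/4 by ring]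
    rw [show ((n:ℝ)*d + |w - (2*(j:ℝ) - n)*d|)/2 * (((n:ℝ)*d + |w + (2*(j:ℝ) - n)*d|)/2)
        = (((n:ℝ)*d + |w - (2*(j:ℝ) - n)*d|) * ((n:ℝ)*d + |w + (2*(j:ℝ) - n)*d|))/4 by ring]
    linarith
  set Q : ℕ := ∏ j ∈ Finset.range (n+1), (2*n - j : ℕ) with hQdef
  have hprodh : ∏ j ∈ Finset.range (n+1), (((n + j : ℕ):ℝ) * d) = (Q:ℝ) * d^(n+1) := by
    rw [Finset.prod_mul_distrib, Finset.prod_const, Finset.card_range, ← Nat.cast_prod]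
    congr 2
    rw [hQdef]
    rw [← Finset.prod_range_reflect (fun j => n + j) (n+1)]
    refine Finset.prod_congr rfl (fun j hj => ?_)
    have := Finset.mem_range.mp hj
    omega
  have hprodg : ∏ j ∈ Finset.range (n+1), g j ≤ (Q:ℝ) * d^(n+1) := by
    have hg0 : ∀ j, 0 ≤ g j := fun j => le_trans (by positivity) (hgpos j)
    have hrefl_g : ∏ j ∈ Finset.range (n+1), g (n - j) = ∏ j ∈ Finset.range (n+1), g j := by
      simpa using Finset.prod_range_reflect g (n+1)
    have hrefl_h : ∏ j ∈ Finset.range (n+1), (((n + (n - j) : ℕ):ℝ) * d)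
        = ∏ j ∈ Finset.range (n+1), (((n + j : ℕ):ℝ) * d) := by
      simpa using Finset.prod_range_reflect (fun j => ((n + j : ℕ):ℝ) * d) (n+1)
    have hsq : (∏ j ∈ Finset.range (n+1), g j)^2
        ≤ (∏ j ∈ Finset.range (n+1), (((n + j : ℕ):ℝ) * d))^2 := by
      calc (∏ j ∈ Finset.range (n+1), g j)^2
          = (∏ j ∈ Finset.range (n+1), g j) * (∏ j ∈ Finset.range (n+1), g (n - j)) := by
            rw [hrefl_g]; ring
        _ = ∏ j ∈ Finset.range (n+1), (g j * g (n - j)) := (Finset.prod_mul_distrib).symm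
        _ ≤ ∏ j ∈ Finset.range (n+1), ((((n + (n-j) : ℕ):ℝ) * d) * (((n + j : ℕ):ℝ) * d)) := by
            refine Finset.prod_le_prod (fun j hj => mul_nonneg (hg0 j) (hg0 _)) (fun j hj => ?_)
            exact hpair j (Nat.lt_succ_iff.mp (Finset.mem_range.mp hj))
        _ = (∏ j ∈ Finset.range (n+1), (((n + j : ℕ):ℝ) * d))^2 := by
            rw [Finset.prod_mul_distrib, hrefl_h]; ring
    have hg0' : 0 ≤ ∏ j ∈ Finset.range (n+1), g j := Finset.prod_nonneg (fun j _ => hg0 j)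
    have hh0' : 0 ≤ ∏ j ∈ Finset.range (n+1), (((n + j : ℕ):ℝ) * d) :=
      Finset.prod_nonneg (fun j _ => by positivity)
    nlinarith [hsq, hg0', hh0']
  -- bound each Lagrange term
  have hET : ∀ i ∈ Finset.range (n+1),
      ∏ j ∈ (Finset.range (n+1)).erase i, (|xs - v j| / |v i - v j|)
        < 2 * (Q:ℝ) / ((n : ℝ) * ((Nat.factorial i : ℝ) * (Nat.factorial (n - i) : ℝ))) := by
    intro i hi
    have hin : i ≤ n := Nat.lt_succ_iff.mp (Finset.mem_range.mp hi)
    have hmem : ∀ j ∈ (Finset.range (n+1)).erase i, j ≤ n := fun j hj =>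
      Nat.lt_succ_iff.mp (Finset.mem_range.mp (Finset.mem_of_mem_erase hj))
    have hcardE : ((Finset.range (n+1)).erase i).Nonempty := by
      rw [← Finset.card_pos, Finset.card_erase_of_mem hi, Finset.card_range]
      omega
    have hNum : ∏ j ∈ (Finset.range (n+1)).erase i, |xs - v j| < 2*(Q:ℝ)*d^n/(n:ℝ) := by
      have step1 : ∏ j ∈ (Finset.range (n+1)).erase i, |xs - v j|
          ≤ ∏ j ∈ (Finset.range (n+1)).erase i, βr j :=
        Finset.prod_le_prod (fun j _ => abs_nonneg _) (fun j hj => hxβ j (hmem j hj))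
      have step2 : ∏ j ∈ (Finset.range (n+1)).erase i, βr j
          < ∏ j ∈ (Finset.range (n+1)).erase i, g j :=
        Finset.prod_lt_prod_of_nonempty (fun j _ => hβpos j) (fun j _ => hβg j) hcardE
      have step3 : (∏ j ∈ (Finset.range (n+1)).erase i, g j) * g i
          = ∏ j ∈ Finset.range (n+1), g j := Finset.prod_erase_mul _ _ hi
      have hgprodnn : 0 ≤ ∏ j ∈ (Finset.range (n+1)).erase i, g j :=
        Finset.prod_nonneg (fun j _ => le_trans (by positivity) (hgpos j))
      have step5 : (∏ j ∈ (Finset.range (n+1)).erase i, g j) * ((n:ℝ)*d/2) ≤ (Q:ℝ)*d^(n+1) := by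
        calc (∏ j ∈ (Finset.range (n+1)).erase i, g j) * ((n:ℝ)*d/2)
            ≤ (∏ j ∈ (Finset.range (n+1)).erase i, g j) * g i :=
              mul_le_mul_of_nonneg_left (hgpos i) hgprodnn
          _ = ∏ j ∈ Finset.range (n+1), g j := step3
          _ ≤ (Q:ℝ)*d^(n+1) := hprodg
      have step6 : ∏ j ∈ (Finset.range (n+1)).erase i, g j ≤ 2*(Q:ℝ)*d^n/(n:ℝ) := by
        have h2 := (le_div_iff₀ (show (0:ℝ) < (n:ℝ)*d/2 by positivity)).mpr step5
        have h3 : (Q:ℝ)*d^(n+1)/((n:ℝ)*d/2) = 2*(Q:ℝ)*d^n/(n:ℝ) := by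
          rw [pow_succ]
          field_simp
        rwa [h3] at h2
      exact lt_of_le_of_lt step1 (lt_of_lt_of_le step2 step6)
    have hDen : d^n * ((Nat.factorial i : ℝ) * (Nat.factorial (n-i) : ℝ))
        ≤ ∏ j ∈ (Finset.range (n+1)).erase i, |v i - v j| := by
      have hfac : ∀ j ∈ (Finset.range (n+1)).erase i, |(i:ℝ) - (j:ℝ)| * d ≤ |v i - v j| := by
        intro j hj
        have hjn := hmem j hj
        have hji : j ≠ i := Finset.ne_of_mem_erase hj
        rcases Nat.lt_or_ge i j with h | h
        · have hs := hsep' i j h.le hjn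
          have hij : (i:ℝ) < j := by exact_mod_cast h
          rw [abs_of_neg (by linarith : (i:ℝ) - j < 0), abs_sub_comm,
            abs_of_pos (by nlinarith : (0:ℝ) < v j - v i)]
          nlinarith
        · have h2 : j < i := by omega
          have hs := hsep' j i h2.le hin
          have hij : (j:ℝ) < i := by exact_mod_cast h2
          rw [abs_of_pos (by linarith : (0:ℝ) < (i:ℝ) - j),
            abs_of_pos (by nlinarith : (0:ℝ) < v i - v j)]
          nlinarith
      calc d^n * ((Nat.factorial i : ℝ) * (Nat.factorial (n-i) : ℝ))
          = ∏ j ∈ (Finset.range (n+1)).erase i, (|(i:ℝ) - (j:ℝ)| * d) := by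
            rw [Finset.prod_mul_distrib, Finset.prod_const,
              Finset.card_erase_of_mem hi, Finset.card_range, remez_prod_erase_dist n i hin,
              Nat.add_sub_cancel]
            ring
        _ ≤ ∏ j ∈ (Finset.range (n+1)).erase i, |v i - v j| :=
            Finset.prod_le_prod (fun j _ => by positivity) hfac
    have hDpos : (0:ℝ) < d^n * ((Nat.factorial i : ℝ) * (Nat.factorial (n-i) : ℝ)) := by
      have := Nat.factorial_pos i
      have := Nat.factorial_pos (n-i)
      positivity
    have hNnn : 0 ≤ ∏ j ∈ (Finset.range (n+1)).erase i, |xs - v j| :=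
      Finset.prod_nonneg (fun j _ => abs_nonneg _)
    calc ∏ j ∈ (Finset.range (n+1)).erase i, (|xs - v j| / |v i - v j|)
        = (∏ j ∈ (Finset.range (n+1)).erase i, |xs - v j|)
          / (∏ j ∈ (Finset.range (n+1)).erase i, |v i - v j|) := Finset.prod_div_distrib _ _
      _ ≤ (∏ j ∈ (Finset.range (n+1)).erase i, |xs - v j|)
          / (d^n * ((Nat.factorial i : ℝ) * (Nat.factorial (n-i) : ℝ))) := by
          apply div_le_div_of_nonneg_left hNnn hDpos hDen
      _ < (2*(Q:ℝ)*d^n/(n:ℝ))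
          / (d^n * ((Nat.factorial i : ℝ) * (Nat.factorial (n-i) : ℝ))) := by
          exact div_lt_div_of_pos_right hNum hDpos
      _ = 2 * (Q:ℝ) / ((n : ℝ) * ((Nat.factorial i : ℝ) * (Nat.factorial (n - i) : ℝ))) := by
          have hd0 : d ≠ 0 := hd.ne'
          have hf1 : (Nat.factorial i : ℝ) ≠ 0 := Nat.cast_ne_zero.mpr (Nat.factorial_ne_zero _)
          have hf2 : (Nat.factorial (n-i) : ℝ) ≠ 0 := Nat.cast_ne_zero.mpr (Nat.factorial_ne_zero _)
          have hn0 : (n:ℝ) ≠ 0 := by positivity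
          field_simp
  -- assemble
  have habs : M ≤ ∑ i ∈ Finset.range (n+1),
      (θ*M) * ∏ j ∈ (Finset.range (n+1)).erase i, (|xs - v j| / |v i - v j|) := by
    conv_lhs => rw [hMval, heval]
    refine le_trans (Finset.abs_sum_le_sum_abs _ _) (Finset.sum_le_sum (fun i hi => ?_))
    have hin : i ≤ n := Nat.lt_succ_iff.mp (Finset.mem_range.mp hi)
    rw [abs_mul, Finset.abs_prod]
    have e1 : ∀ j ∈ (Finset.range (n+1)).erase i,
        |(v i - v j)⁻¹ * (xs - v j)| = |xs - v j| / |v i - v j| := by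
      intro j hj
      rw [abs_mul, abs_inv, inv_mul_eq_div]
    rw [Finset.prod_congr rfl e1]
    exact mul_le_mul_of_nonneg_right (hnode i hin)
      (Finset.prod_nonneg (fun j _ => div_nonneg (abs_nonneg _) (abs_nonneg _)))
  have hsum8 := remez_sumL n hn1
  rw [← hQdef] at hsum8
  have hfinal : M < M := by
    calc M ≤ ∑ i ∈ Finset.range (n+1),
          (θ*M) * ∏ j ∈ (Finset.range (n+1)).erase i, (|xs - v j| / |v i - v j|) := habs
      _ < ∑ i ∈ Finset.range (n+1),
          (θ*M) * (2 * (Q:ℝ) / ((n : ℝ) * ((Nat.factorial i : ℝ) * (Nat.factorial (n - i) : ℝ)))) := by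
          refine Finset.sum_lt_sum_of_nonempty ⟨0, Finset.mem_range.mpr (by omega)⟩
            (fun i hi => ?_)
          exact mul_lt_mul_of_pos_left (hET i hi) (by positivity)
      _ = (θ*M) * ∑ i ∈ Finset.range (n+1),
          2 * (Q:ℝ) / ((n : ℝ) * ((Nat.factorial i : ℝ) * (Nat.factorial (n - i) : ℝ))) := by
          rw [← Finset.mul_sum]
      _ ≤ (θ*M) * 8^n := mul_le_mul_of_nonneg_left hsum8 (by positivity)
      _ = M := by
          rw [hθdef]
          field_simp
  exact absurd hfinal (lt_irrefl M)
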